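/- Fix N ≥ 1, b ∈ ℝ, nonzero reals p_i, q_i with p_i⁻¹ ≠ b, q_i⁻¹ ≠ b, constants a_{i,1}, a_{i,2}, ξ_{i0}, η_{i0} ∈ ℝ, and let τ_n be the associated Casoratian. Then for every n ∈ ℤ, ∂_{x₁}τ_n equals the determinant of the N×N matrix whose first column is (ψ_i^{(n−1)})_{i=1..N} and whose j-th column, for 2 ≤ j ≤ N, is (ψ_i^{(n+j−1)})_{i=1..N}; that is, ∂_{x₁}τ_n = det[ψ^{(n−1)}, ψ^{(n+1)}, ψ^{(n+2)}, …, ψ^{(n+N−1)}]. -/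

import Mathlib

/-- Partial derivative in `x₁`. -/
noncomputable def pd1 (F : ℝ → ℝ → ℝ → ℝ → ℝ) : ℝ → ℝ → ℝ → ℝ → ℝ :=
  fun x1 x2 xm1 xm2 => deriv (fun t => F t x2 xm1 xm2) x1

/-- Partial derivative in `x₂`. -/
noncomputable def pd2 (F : ℝ → ℝ → ℝ → ℝ → ℝ) : ℝ → ℝ → ℝ → ℝ → ℝ :=
  fun x1 x2 xm1 xm2 => deriv (fun t => F x1 t xm1 xm2) x2

/-- Partial derivative in `x₋₁`. -/
noncomputable def pdm1 (F : ℝ → ℝ → ℝ → ℝ → ℝ) : ℝ → ℝ → ℝ → ℝ → ℝ :=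
  fun x1 x2 xm1 xm2 => deriv (fun t => F x1 x2 t xm2) xm1

/-- Partial derivative in `x₋₂`. -/
noncomputable def pdm2 (F : ℝ → ℝ → ℝ → ℝ → ℝ) : ℝ → ℝ → ℝ → ℝ → ℝ :=
  fun x1 x2 xm1 xm2 => deriv (fun t => F x1 x2 xm1 t) xm2

/-- The functions ψ_i^{(n)} of (x₁, x₂, x₋₁, x₋₂). -/
noncomputable def psi {N : ℕ} (b : ℝ) (p q a1 a2 ξ0 η0 : Fin N → ℝ)
    (i : Fin N) (n : ℤ) : ℝ → ℝ → ℝ → ℝ → ℝ :=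
  fun x1 x2 xm1 xm2 =>
    a1 i * ((p i)⁻¹ - b) ^ n *
      Real.exp (x1 / ((p i)⁻¹ - b) + x2 / ((p i)⁻¹ - b) ^ 2
        + (p i)⁻¹ * xm1 + ((p i)⁻¹) ^ 2 * xm2 + ξ0 i)
    + a2 i * ((q i)⁻¹ - b) ^ n *
      Real.exp (x1 / ((q i)⁻¹ - b) + x2 / ((q i)⁻¹ - b) ^ 2
        + (q i)⁻¹ * xm1 + ((q i)⁻¹) ^ 2 * xm2 + η0 i)

/-- The Casoratian τ_n = det[(ψ_i^{(n+j-1)})]. -/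
noncomputable def tau {N : ℕ} (b : ℝ) (p q a1 a2 ξ0 η0 : Fin N → ℝ)
    (n : ℤ) : ℝ → ℝ → ℝ → ℝ → ℝ :=
  fun x1 x2 xm1 xm2 =>
    Matrix.det (Matrix.of fun i j : Fin N =>
      psi b p q a1 a2 ξ0 η0 i (n + (j : ℕ)) x1 x2 xm1 xm2)

/-- Derivative of a determinant with entrywise differentiable dependence. -/
theorem hasDerivAt_det_aux {N : ℕ} (M : ℝ → Matrix (Fin N) (Fin N) ℝ)
    (M' : Matrix (Fin N) (Fin N) ℝ) (x : ℝ)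
    (h : ∀ i j, HasDerivAt (fun t => M t i j) (M' i j) x) :
    HasDerivAt (fun t => (M t).det)
      (∑ j : Fin N, ((M x).updateCol j (fun i => M' i j)).det) x := by
  simp only [Matrix.det_apply']
  have key : ∀ σ : Equiv.Perm (Fin N),
      HasDerivAt (fun t => (Equiv.Perm.sign σ : ℝ) * ∏ i, M t (σ i) i)
        ((Equiv.Perm.sign σ : ℝ) *
          ∑ k : Fin N, (∏ i ∈ Finset.univ.erase k, M x (σ i) i) • M' (σ k) k) x := by
    intro σ
    exact (HasDerivAt.fun_finsetProd (fun i _ => h (σ i) i)).const_mul _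
  have := HasDerivAt.fun_sum (u := Finset.univ) (fun σ _ => key σ)
  convert this using 1
  · rfl
  · rfl
  rw [Finset.sum_comm]
  refine Finset.sum_congr rfl fun σ _ => ?_
  rw [Finset.mul_sum]
  refine Finset.sum_congr rfl fun k _ => ?_
  rw [← Finset.mul_prod_erase Finset.univ _ (Finset.mem_univ k)]
  simp only [Matrix.updateCol_apply, smul_eq_mul]
  have : ∀ i ∈ Finset.univ.erase k,
      (if i = k then M' (σ i) k else M x (σ i) i) = M x (σ i) i := by
    intro i hi
    rw [if_neg (Finset.mem_erase.mp hi).1]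
  rw [Finset.prod_congr rfl this]
  simp only [if_true]
  ring

/-- ∂_{x₁} ψ_i^{(n)} = ψ_i^{(n-1)}. -/
theorem psi_hasDerivAt {N : ℕ} (b : ℝ) (p q a1 a2 ξ0 η0 : Fin N → ℝ)
    (i : Fin N) (hpb : (p i)⁻¹ ≠ b) (hqb : (q i)⁻¹ ≠ b) (n : ℤ)
    (x1 x2 xm1 xm2 : ℝ) :
    HasDerivAt (fun t => psi b p q a1 a2 ξ0 η0 i n t x2 xm1 xm2)
      (psi b p q a1 a2 ξ0 η0 i (n - 1) x1 x2 xm1 xm2) x1 := by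
  have hA : (p i)⁻¹ - b ≠ 0 := sub_ne_zero.mpr hpb
  have hB : (q i)⁻¹ - b ≠ 0 := sub_ne_zero.mpr hqb
  set A := (p i)⁻¹ - b with hAdef
  set B := (q i)⁻¹ - b with hBdef
  have h1 : HasDerivAt (fun t : ℝ => t / A + (x2 / A ^ 2 + (p i)⁻¹ * xm1
      + ((p i)⁻¹) ^ 2 * xm2 + ξ0 i)) A⁻¹ x1 := by
    simpa [one_div] using ((hasDerivAt_id x1).div_const A).add_const (x2 / A ^ 2 + (p i)⁻¹ * xm1
        + ((p i)⁻¹) ^ 2 * xm2 + ξ0 i)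
  have h2 : HasDerivAt (fun t : ℝ => t / B + (x2 / B ^ 2 + (q i)⁻¹ * xm1
      + ((q i)⁻¹) ^ 2 * xm2 + η0 i)) B⁻¹ x1 := by
    simpa [one_div] using ((hasDerivAt_id x1).div_const B).add_const (x2 / B ^ 2 + (q i)⁻¹ * xm1
        + ((q i)⁻¹) ^ 2 * xm2 + η0 i)
  have e1 := (h1.exp.const_mul (a1 i * A ^ n))
  have e2 := (h2.exp.const_mul (a2 i * B ^ n))
  have := e1.fun_add e2
  simp only [psi]
  convert this using 1
  · rfl
  · rfl
  · funext t; rw [hAdef, hBdef]; ring_nf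
  · rw [zpow_sub_one₀ hA, zpow_sub_one₀ hB, hAdef, hBdef]; ring_nf

/-- ∂_{x₁}τ_n = |n−1, n+1, n+2, …, n+N−1|. -/
theorem tau_x1_deriv {N : ℕ} (hN : 1 ≤ N) (b : ℝ)
    (p q a1 a2 ξ0 η0 : Fin N → ℝ)
    (hp : ∀ i, p i ≠ 0) (hq : ∀ i, q i ≠ 0)
    (hpb : ∀ i, (p i)⁻¹ ≠ b) (hqb : ∀ i, (q i)⁻¹ ≠ b) :
    ∀ (n : ℤ) (x1 x2 xm1 xm2 : ℝ),
      pd1 (tau b p q a1 a2 ξ0 η0 n) x1 x2 xm1 xm2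
      = Matrix.det (Matrix.of fun i j : Fin N =>
          psi b p q a1 a2 ξ0 η0 i
            (if (j : ℕ) = 0 then n - 1 else n + (j : ℕ)) x1 x2 xm1 xm2) := by
  intro n x1 x2 xm1 xm2
  set Ψ := psi b p q a1 a2 ξ0 η0 with hΨ
  set M : ℝ → Matrix (Fin N) (Fin N) ℝ :=
    fun t => Matrix.of fun i j : Fin N => Ψ i (n + (j : ℕ)) t x2 xm1 xm2 with hM
  set M' : Matrix (Fin N) (Fin N) ℝ :=
    Matrix.of fun i j : Fin N => Ψ i (n + (j : ℕ) - 1) x1 x2 xm1 xm2 with hM'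
  have hder : ∀ i j, HasDerivAt (fun t => M t i j) (M' i j) x1 := by
    intro i j
    simpa [hM, hM', hΨ] using
      psi_hasDerivAt b p q a1 a2 ξ0 η0 i (hpb i) (hqb i) (n + (j : ℕ)) x1 x2 xm1 xm2
  have key := (hasDerivAt_det_aux M M' x1 hder).deriv
  have hτ : pd1 (tau b p q a1 a2 ξ0 η0 n) x1 x2 xm1 xm2
      = deriv (fun t => (M t).det) x1 := rfl
  rw [hτ, key]
  have k0 : Fin N := ⟨0, hN⟩
  rw [Finset.sum_eq_single (⟨0, hN⟩ : Fin N)]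
  · congr 1
    ext i j
    simp only [Matrix.updateCol_apply, Matrix.of_apply, hM, hM']
    by_cases hj : j = (⟨0, hN⟩ : Fin N)
    · subst hj
      simp
    · rw [if_neg hj, if_neg (by simpa [Fin.ext_iff] using hj)]
  · intro k _ hk
    have hk0 : (k : ℕ) ≠ 0 := by simpa [Fin.ext_iff] using hk
    have hk1 : 1 ≤ (k : ℕ) := Nat.one_le_iff_ne_zero.mpr hk0
    have hlt : (k : ℕ) - 1 < N := lt_of_le_of_lt (Nat.sub_le _ _) k.isLt
    refine Matrix.det_zero_of_column_eq (i := (⟨(k : ℕ) - 1, hlt⟩ : Fin N)) (j := k)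
      (fun h => ?_) (fun i => ?_)
    · have := congrArg Fin.val h
      simp only at this
      omega
    · rw [Matrix.updateCol_apply, Matrix.updateCol_apply, if_pos rfl,
        if_neg (by simp [Fin.ext_iff]; omega)]
      simp only [Matrix.of_apply, hM, hM']
      congr 1
      push_cast [Nat.cast_sub hk1]
      ring
  · intro h
    exact absurd (Finset.mem_univ _) h
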